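/- Define f : [0,1] → 2^[0,1] by f(x) = {0} for 0 ≤ x < 1 and f(1) = [0,1]. Then f is upper semicontinuous, has the weak intermediate value property, does not have the intermediate value property, and is not almost nonfissile (the nonfissile points of the graph are not dense in the graph), even though the set of x with f(x) a singleton is a dense G_δ subset of [0,1]. -/

import Mathlib

open Set Filter Topology

/-- The graph of a set-valued function on `[0,1]`. -/
def GraphOn01 (f : ℝ → Set ℝ) : Set (ℝ × ℝ) :=
  {p | p.1 ∈ Icc (0:ℝ) 1 ∧ p.2 ∈ f p.1}

/-- Upper semicontinuous set-valued function `[0,1] → 2^[0,1]`: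
nonempty compact values inside `[0,1]` and closed graph. -/
def USC (f : ℝ → Set ℝ) : Prop :=
  (∀ x ∈ Icc (0:ℝ) 1, (f x).Nonempty ∧ f x ⊆ Icc (0:ℝ) 1 ∧ IsCompact (f x)) ∧
    IsClosed (GraphOn01 f)

/-- The intermediate value property. -/
def IVP (f : ℝ → Set ℝ) : Prop :=
  ∀ x₁ ∈ Icc (0:ℝ) 1, ∀ x₂ ∈ Icc (0:ℝ) 1, x₁ ≠ x₂ →
    ∀ y₁ ∈ f x₁, ∀ y₂ ∈ f x₂, y₁ ≠ y₂ →
      ∀ y ∈ Ioo (min y₁ y₂) (max y₁ y₂),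
        ∃ x ∈ Ioo (min x₁ x₂) (max x₁ x₂), y ∈ f x

/-- The weak intermediate value property. -/
def WIVP (f : ℝ → Set ℝ) : Prop :=
  ∀ x₁ ∈ Icc (0:ℝ) 1, ∀ x₂ ∈ Icc (0:ℝ) 1, x₁ ≠ x₂ →
    ∀ y₁ ∈ f x₁, ∃ y₂ ∈ f x₂,
      ∀ y ∈ Icc (min y₁ y₂) (max y₁ y₂),
        ∃ x ∈ Icc (min x₁ x₂) (max x₁ x₂), y ∈ f x

/-- Weak continuity (from the left and the right) at each interior point. -/
def WeakCont (f : ℝ → Set ℝ) : Prop :=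
  ∀ x ∈ Ioo (0:ℝ) 1, ∀ y ∈ f x,
    (∃ u : ℕ → ℝ × ℝ, (∀ k, u k ∈ GraphOn01 f ∧ (u k).1 < x) ∧
      Tendsto u atTop (𝓝 (x, y))) ∧
    (∃ u : ℕ → ℝ × ℝ, (∀ k, u k ∈ GraphOn01 f ∧ x < (u k).1) ∧
      Tendsto u atTop (𝓝 (x, y)))

/-- `f` is almost nonfissile: the nonfissile points of the graph are dense in the graph. -/
def AlmostNonfissile (f : ℝ → Set ℝ) : Prop :=
  GraphOn01 f ⊆ closure {p | p ∈ GraphOn01 f ∧ f p.1 = {p.2}}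

/-- `f` is light: each fiber `{x : y ∈ f x}` has empty interior in `[0,1]`. -/
def Light (f : ℝ → Set ℝ) : Prop :=
  ∀ y : ℝ, ∀ U : Set ℝ, IsOpen U → (U ∩ Icc (0:ℝ) 1).Nonempty →
    ∃ x ∈ U ∩ Icc (0:ℝ) 1, y ∉ f x

/-- `f` is surjective onto `[0,1]`. -/
def Surj (f : ℝ → Set ℝ) : Prop :=
  ∀ y ∈ Icc (0:ℝ) 1, ∃ x ∈ Icc (0:ℝ) 1, y ∈ f x

/-- The `n`-fold set-valued composition of `f`. -/
def fIter (f : ℝ → Set ℝ) : ℕ → ℝ → Set ℝ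
  | 0, x => {x}
  | n + 1, x => ⋃ z ∈ fIter f n x, f z

/-- The image `f^n[A] = ⋃_{a ∈ A} f^n(a)`. -/
def imIter (f : ℝ → Set ℝ) (n : ℕ) (A : Set ℝ) : Set ℝ :=
  ⋃ a ∈ A, fIter f n a

/-- The inverse limit of the single bonding function `f` on `[0,1]`. -/
def InvLim (f : ℝ → Set ℝ) : Set (ℕ → ℝ) :=
  {z | (∀ i, z i ∈ Icc (0:ℝ) 1) ∧ ∀ i, z i ∈ f (z (i + 1))}

/-- `X` is irreducible between `x` and `y`: the only subcontinuum of `X`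
containing both is `X` itself. -/
def IrreducibleBetween (X : Set (ℕ → ℝ)) (x y : ℕ → ℝ) : Prop :=
  x ∈ X ∧ y ∈ X ∧
    ∀ K ⊆ X, IsCompact K → IsConnected K → x ∈ K → y ∈ K → K = X

private lemma icc_ne_singleton (y : ℝ) : Icc (0:ℝ) 1 ≠ {y} := by
  intro h
  have h0 : (0:ℝ) ∈ Icc (0:ℝ) 1 := ⟨le_refl _, zero_le_one⟩
  have h1 : (1:ℝ) ∈ Icc (0:ℝ) 1 := ⟨zero_le_one, le_refl _⟩
  rw [h] at h0 h1
  simp only [mem_singleton_iff] at h0 h1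
  exact zero_ne_one (h0.trans h1.symm)

private lemma graph_eq :
    GraphOn01 (fun x => if x < (1:ℝ) then ({0} : Set ℝ) else Icc (0:ℝ) 1) =
      (Icc (0:ℝ) 1 ×ˢ ({0} : Set ℝ)) ∪ (({1} : Set ℝ) ×ˢ Icc (0:ℝ) 1) := by
  ext ⟨x, y⟩
  simp only [GraphOn01, mem_setOf_eq, mem_union, mem_prod, mem_singleton_iff]
  constructor
  · rintro ⟨hx, hy⟩
    by_cases h : x < 1
    · rw [if_pos h] at hy; exact Or.inl ⟨hx, hy⟩
    · rw [if_neg h] at hy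
      exact Or.inr ⟨le_antisymm hx.2 (not_lt.mp h), hy⟩
  · rintro (⟨hx, hy⟩ | ⟨hx, hy⟩)
    · refine ⟨hx, ?_⟩
      by_cases h : x < 1
      · rw [if_pos h]; exact hy
      · rw [if_neg h]; rw [hy]; exact ⟨le_refl _, zero_le_one⟩
    · subst hx
      refine ⟨⟨zero_le_one, le_refl _⟩, ?_⟩
      rw [if_neg (lt_irrefl _)]; exact hy

/-- `f = {0}` on `[0,1)`, `f(1) = [0,1]` is usc, has the weak IVP,
lacks the IVP, is not almost nonfissile, yet its single-valued points form a
dense Gδ subset of `[0,1]`. -/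
theorem stmt12 :
    USC (fun x => if x < (1:ℝ) then ({0} : Set ℝ) else Icc (0:ℝ) 1) ∧
      WIVP (fun x => if x < (1:ℝ) then ({0} : Set ℝ) else Icc (0:ℝ) 1) ∧
      ¬ IVP (fun x => if x < (1:ℝ) then ({0} : Set ℝ) else Icc (0:ℝ) 1) ∧
      ¬ AlmostNonfissile (fun x => if x < (1:ℝ) then ({0} : Set ℝ) else Icc (0:ℝ) 1) ∧
      IsGδ {x : ℝ | x ∈ Icc (0:ℝ) 1 ∧
        ∃ y, (if x < (1:ℝ) then ({0} : Set ℝ) else Icc (0:ℝ) 1) = {y}} ∧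
      Icc (0:ℝ) 1 ⊆ closure {x : ℝ | x ∈ Icc (0:ℝ) 1 ∧
        ∃ y, (if x < (1:ℝ) then ({0} : Set ℝ) else Icc (0:ℝ) 1) = {y}} := by
  set f : ℝ → Set ℝ := fun x => if x < (1:ℝ) then ({0} : Set ℝ) else Icc (0:ℝ) 1 with hf
  have hsub : ∀ x, f x ⊆ Icc (0:ℝ) 1 := by
    intro x y hy
    simp only [hf] at hy
    by_cases h : x < 1
    · rw [if_pos h] at hy; rw [hy]; exact ⟨le_refl _, zero_le_one⟩
    · rw [if_neg h] at hy; exact hy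
  have hzero : ∀ x, (0:ℝ) ∈ f x := by
    intro x
    simp only [hf]
    by_cases h : x < 1
    · rw [if_pos h]; rfl
    · rw [if_neg h]; exact ⟨le_refl _, zero_le_one⟩
  have hsetEq : {x : ℝ | x ∈ Icc (0:ℝ) 1 ∧
      ∃ y, (if x < (1:ℝ) then ({0} : Set ℝ) else Icc (0:ℝ) 1) = {y}} = Ico (0:ℝ) 1 := by
    ext x
    simp only [mem_setOf_eq, mem_Ico, mem_Icc]
    constructor
    · rintro ⟨⟨h0, h1⟩, y, hy⟩
      refine ⟨h0, ?_⟩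
      by_contra h
      rw [if_neg h] at hy
      exact icc_ne_singleton y hy
    · rintro ⟨h0, h1⟩
      exact ⟨⟨h0, le_of_lt h1⟩, 0, if_pos h1⟩
  refine ⟨⟨?_, ?_⟩, ?_, ?_, ?_, ?_, ?_⟩
  · -- values
    intro x hx
    by_cases h : x < 1
    · simp only [hf, if_pos h]
      exact ⟨⟨0, rfl⟩, by intro y hy; rw [hy]; exact ⟨le_refl _, zero_le_one⟩,
        isCompact_singleton⟩
    · simp only [hf, if_neg h]
      exact ⟨⟨0, ⟨le_refl _, zero_le_one⟩⟩, subset_rfl, isCompact_Icc⟩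
  · -- closed graph
    rw [show (fun x => if x < (1:ℝ) then ({0} : Set ℝ) else Icc (0:ℝ) 1) = f from rfl,
      ← hf] at *
    rw [hf, graph_eq]
    exact ((isClosed_Icc.prod isClosed_singleton).union
      (isClosed_singleton.prod isClosed_Icc))
  · -- WIVP
    intro x₁ hx₁ x₂ hx₂ hne y₁ hy₁
    by_cases h2 : x₂ < 1
    · refine ⟨0, hzero x₂, ?_⟩
      intro y hy
      by_cases h1 : x₁ < 1
      · have : y₁ = 0 := by
          have := hy₁; simp only [hf, if_pos h1, mem_singleton_iff] at this; exact this
        rw [this] at hy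
        simp only [min_self, max_self, Icc_self, mem_singleton_iff] at hy
        exact ⟨x₁, ⟨min_le_left _ _, le_max_left _ _⟩, hy ▸ hzero x₁⟩
      · have hx1 : x₁ = 1 := le_antisymm hx₁.2 (not_lt.mp h1)
        refine ⟨1, ⟨?_, ?_⟩, ?_⟩
        · exact (min_le_left _ _).trans hx1.le
        · rw [← hx1]; exact le_max_left _ _
        · simp only [hf, if_neg (lt_irrefl (1:ℝ))]
          have hy₁' : y₁ ∈ Icc (0:ℝ) 1 := hsub x₁ hy₁
          constructor
          · exact le_trans (le_min hy₁'.1 (le_refl 0)) hy.1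
          · exact le_trans hy.2 (max_le hy₁'.2 zero_le_one)
    · -- x₂ = 1
      have hx2 : x₂ = 1 := le_antisymm hx₂.2 (not_lt.mp h2)
      have hy₁' : y₁ ∈ Icc (0:ℝ) 1 := hsub x₁ hy₁
      refine ⟨y₁, ?_, ?_⟩
      · simp only [hf, hx2, if_neg (lt_irrefl (1:ℝ))]; exact hy₁'
      · intro y hy
        simp only [min_self, max_self, Icc_self, mem_singleton_iff] at hy
        refine ⟨x₂, ⟨min_le_right _ _, le_max_right _ _⟩, ?_⟩
        simp only [hf, hx2, if_neg (lt_irrefl (1:ℝ))]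
        rw [hy]; exact hy₁'
  · -- ¬ IVP
    intro h
    have h0 : (0:ℝ) ∈ Icc (0:ℝ) 1 := ⟨le_refl _, zero_le_one⟩
    have h1 : (1:ℝ) ∈ Icc (0:ℝ) 1 := ⟨zero_le_one, le_refl _⟩
    have hy1 : (0:ℝ) ∈ (if (0:ℝ) < (1:ℝ) then ({0} : Set ℝ) else Icc (0:ℝ) 1) := by
      rw [if_pos zero_lt_one]; rfl
    have hy2 : (1:ℝ) ∈ (if (1:ℝ) < (1:ℝ) then ({0} : Set ℝ) else Icc (0:ℝ) 1) := by
      rw [if_neg (lt_irrefl _)]; exact h1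
    obtain ⟨x, hx, hmem⟩ := h 0 h0 1 h1 zero_ne_one 0 hy1 1 hy2 zero_ne_one (1/2)
      (by rw [min_eq_left zero_le_one, max_eq_right zero_le_one]; norm_num)
    rw [min_eq_left zero_le_one, max_eq_right zero_le_one] at hx
    simp only [hf, if_pos hx.2, mem_singleton_iff] at hmem
    norm_num at hmem
  · -- ¬ AlmostNonfissile
    intro h
    have hmem : ((1:ℝ), (1:ℝ)) ∈ GraphOn01 f := by
      refine ⟨⟨zero_le_one, le_refl _⟩, ?_⟩
      simp only [hf, if_neg (lt_irrefl (1:ℝ))]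
      exact ⟨zero_le_one, le_refl _⟩
    have hcl := h hmem
    have hsub2 : {p : ℝ × ℝ | p ∈ GraphOn01 f ∧ f p.1 = {p.2}} ⊆ {p : ℝ × ℝ | p.2 = 0} := by
      rintro ⟨x, y⟩ ⟨hp, hsing⟩
      simp only [hf] at hsing
      by_cases hx : x < 1
      · rw [if_pos hx] at hsing
        simp only [mem_setOf_eq]
        exact (singleton_eq_singleton_iff.mp hsing).symm
      · rw [if_neg hx] at hsing
        exact absurd hsing (icc_ne_singleton y)
    have hclosed : IsClosed {p : ℝ × ℝ | p.2 = 0} :=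
      isClosed_eq continuous_snd continuous_const
    have := (closure_minimal hsub2 hclosed) hcl
    simp only [mem_setOf_eq] at this
    exact one_ne_zero this
  · -- IsGδ
    rw [hsetEq]
    have : Ico (0:ℝ) 1 = Icc (0:ℝ) 1 ∩ Iio 1 := by
      ext x; simp only [mem_Ico, mem_inter_iff, mem_Icc, mem_Iio]
      exact ⟨fun ⟨a, b⟩ => ⟨⟨a, le_of_lt b⟩, b⟩, fun ⟨⟨a, _⟩, b⟩ => ⟨a, b⟩⟩
    rw [this]
    exact IsGδ.inter isClosed_Icc.isGδ isOpen_Iio.isGδ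
  · -- density
    rw [hsetEq, closure_Ico (by norm_num : (0:ℝ) ≠ 1)]
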